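/- Let X_1, …, X_n be real random variables with mean zero, uniformly bounded fourth moments (E[X_i^4] ≤ C), and suppose there is a dependency structure: for each i there is a set J_i ⊆ {1,…,n} with |J_i| ≤ m such that X_i is independent of {X_j : j ∉ J_i}. Then E[(∑_{i=1}^n X_i)^4] ≤ C' (n m^3 + n^2 m^2) for a constant C' depending only on C. -/

import Mathlib

open MeasureTheory ProbabilityTheory Finset

/-! ### ENNReal arithmetic -/

private lemma ennreal_half : (1:ENNReal)/2 = 1/4 + 1/4 := by
  rw [one_div, one_div, ← two_mul]
  rw [(by norm_num : (4:ENNReal) = 2*2), ENNReal.mul_inv (Or.inl two_ne_zero) (Or.inl (by norm_num)),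
    ← mul_assoc, ENNReal.mul_inv_cancel two_ne_zero (by norm_num), one_mul]

private lemma ennreal_one : (1:ENNReal)/1 = 1/2 + 1/2 := by
  rw [one_div, one_div, ENNReal.inv_two_add_inv_two, inv_one]

section Analysis

variable {Ω : Type} [MeasureSpace Ω] [IsProbabilityMeasure (ℙ : Measure Ω)]

set_option linter.unusedSectionVars false

private lemma memLp2_mul {f g : Ω → ℝ} (hf : MemLp f 4 (ℙ : Measure Ω))
    (hg : MemLp g 4 (ℙ : Measure Ω)) :
    MemLp (fun ω => f ω * g ω) 2 (ℙ : Measure Ω) := by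
  simpa [smul_eq_mul, Pi.mul_def] using hg.smul hf (hpqr := ⟨(by simpa only [one_div] using ennreal_half.symm : (4:ENNReal)⁻¹ + 4⁻¹ = 2⁻¹)⟩)

private lemma memLp2_of_memLp4 {f : Ω → ℝ} (h : MemLp f 4 (ℙ : Measure Ω)) :
    MemLp f 2 (ℙ : Measure Ω) :=
  h.mono_exponent (by norm_num)

private lemma integrable_mul2 {f g : Ω → ℝ} (hf : MemLp f 2 (ℙ : Measure Ω))
    (hg : MemLp g 2 (ℙ : Measure Ω)) :
    Integrable (fun ω => f ω * g ω) (ℙ : Measure Ω) := by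
  have : MemLp (fun ω => f ω * g ω) 1 (ℙ : Measure Ω) := by
    simpa [smul_eq_mul, Pi.mul_def] using hg.smul hf (hpqr := ⟨(by simpa only [one_div] using ennreal_one.symm : (2:ENNReal)⁻¹ + 2⁻¹ = 1⁻¹)⟩)
  exact this.integrable le_rfl

private lemma integrable_mul4 {f1 f2 f3 f4 : Ω → ℝ} (h1 : MemLp f1 4 (ℙ : Measure Ω))
    (h2 : MemLp f2 4 (ℙ : Measure Ω)) (h3 : MemLp f3 4 (ℙ : Measure Ω))
    (h4 : MemLp f4 4 (ℙ : Measure Ω)) :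
    Integrable (fun ω => f1 ω * f2 ω * f3 ω * f4 ω) (ℙ : Measure Ω) := by
  have h := integrable_mul2 (memLp2_mul h1 h2) (memLp2_mul h3 h4)
  exact h.congr (ae_of_all _ fun ω => by ring)

private lemma integrable_mul3 {f1 f2 f3 : Ω → ℝ} (h1 : MemLp f1 4 (ℙ : Measure Ω))
    (h2 : MemLp f2 4 (ℙ : Measure Ω)) (h3 : MemLp f3 4 (ℙ : Measure Ω)) :
    Integrable (fun ω => f1 ω * (f2 ω * f3 ω)) (ℙ : Measure Ω) := by
  have h := integrable_mul2 (memLp2_of_memLp4 h1) (memLp2_mul h2 h3)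
  exact h.congr (ae_of_all _ fun ω => rfl)

private lemma integrable_pow4 {f : Ω → ℝ} (h : MemLp f 4 (ℙ : Measure Ω)) :
    Integrable (fun ω => f ω ^ 4) (ℙ : Measure Ω) :=
  (integrable_mul4 h h h h).congr (ae_of_all _ fun ω => by ring)

private lemma integrable_prod4 {n : ℕ} {X : Fin n → Ω → ℝ}
    (hLp : ∀ i, MemLp (X i) 4 (ℙ : Measure Ω)) (p : Fin 4 → Fin n) :
    Integrable (fun ω => ∏ r, X (p r) ω) (ℙ : Measure Ω) := by
  have h := integrable_mul4 (hLp (p 0)) (hLp (p 1)) (hLp (p 2)) (hLp (p 3))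
  exact h.congr (ae_of_all _ fun ω => (Fin.prod_univ_four fun r => X (p r) ω).symm)

/-- The bound |E[X_i X_j X_k X_l]| ≤ C (one-sided version suffices). -/
private lemma integral_prod4_le {n : ℕ} {X : Fin n → Ω → ℝ} {C : ℝ}
    (hLp : ∀ i, MemLp (X i) 4 (ℙ : Measure Ω))
    (hC4 : ∀ i, ∫ ω, (X i ω) ^ 4 ∂(ℙ : Measure Ω) ≤ C) (p : Fin 4 → Fin n) :
    ∫ ω, ∏ r, X (p r) ω ∂(ℙ : Measure Ω) ≤ C := by
  have h4 : ∀ i : Fin n, Integrable (fun ω => (X i ω) ^ 4) (ℙ : Measure Ω) :=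
    fun i => integrable_pow4 (hLp i)
  have key : ∫ ω, ∏ r, X (p r) ω ∂(ℙ : Measure Ω) ≤
      ∫ ω, (∑ r : Fin 4, (X (p r) ω)^4)/4 ∂(ℙ : Measure Ω) := by
    apply integral_mono (integrable_prod4 hLp p)
    · exact (integrable_finset_sum univ (fun r (_ : r ∈ univ) => h4 (p r))).div_const 4
    · intro ω
      simp only [Fin.prod_univ_four, Fin.sum_univ_four]
      nlinarith [sq_nonneg (X (p 0) ω * X (p 1) ω - X (p 2) ω * X (p 3) ω),
        sq_nonneg (X (p 0) ω * X (p 1) ω + X (p 2) ω * X (p 3) ω),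
        sq_nonneg ((X (p 0) ω)^2 - (X (p 1) ω)^2), sq_nonneg ((X (p 2) ω)^2 - (X (p 3) ω)^2),
        sq_nonneg ((X (p 0) ω)^2 + (X (p 1) ω)^2), sq_nonneg ((X (p 2) ω)^2 + (X (p 3) ω)^2)]
  refine key.trans ?_
  rw [integral_div, integral_finset_sum _ (fun r (_ : r ∈ univ) => h4 (p r)), Fin.sum_univ_four]
  have := hC4 (p 0); have := hC4 (p 1); have := hC4 (p 2); have := hC4 (p 3)
  linarith

/-- vanishing of E[X_i X_j X_k X_l] when some factor is independent of the rest. -/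
private lemma integral_prod4_eq_zero {n : ℕ} {X : Fin n → Ω → ℝ} {J : Fin n → Finset (Fin n)}
    (hmeas : ∀ i, Measurable (X i)) (hLp : ∀ i, MemLp (X i) 4 (ℙ : Measure Ω))
    (hmean : ∀ i, ∫ ω, X i ω ∂(ℙ : Measure Ω) = 0)
    (hindep : ∀ i, Indep (MeasurableSpace.comap (X i) inferInstance)
        (⨆ j ∈ (J i)ᶜ, MeasurableSpace.comap (X j) inferInstance) (ℙ : Measure Ω))
    (p : Fin 4 → Fin n) (q : Fin 4) (h : ∀ r, r ≠ q → p r ∉ J (p q)) :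
    ∫ ω, ∏ r, X (p r) ω ∂(ℙ : Measure Ω) = 0 := by
  classical
  set g : Ω → ℝ := fun ω => ∏ r ∈ univ.erase q, X (p r) ω with hg
  have hgM : Measurable[⨆ j ∈ (J (p q))ᶜ, MeasurableSpace.comap (X j) inferInstance] g := by
    apply Finset.measurable_prod
    intro r hr
    have hrq : r ≠ q := (Finset.mem_erase.mp hr).1
    have hmem : p r ∈ (J (p q))ᶜ := by simpa using h r hrq
    exact Measurable.of_comap_le (le_iSup₂ (f := fun j (_ : j ∈ (J (p q))ᶜ) =>
      MeasurableSpace.comap (X j) inferInstance) (p r) hmem)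
  have hindepF : IndepFun (X (p q)) g (ℙ : Measure Ω) := by
    rw [IndepFun_iff_Indep]
    exact indep_of_indep_of_le_right (hindep (p q)) (Measurable.comap_le hgM)
  have hXint : Integrable (X (p q)) (ℙ : Measure Ω) := (hLp (p q)).integrable (by norm_num)
  have hgint : Integrable g (ℙ : Measure Ω) := by
    have hcard : (univ.erase q).card = 3 := by
      rw [Finset.card_erase_of_mem (mem_univ q)]
      simp
    obtain ⟨r1, r2, r3, h12, h13, h23, hs⟩ := Finset.card_eq_three.mp hcard
    have : g = fun ω => X (p r1) ω * (X (p r2) ω * X (p r3) ω) := by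
      funext ω
      show ∏ r ∈ univ.erase q, X (p r) ω = _
      rw [hs, Finset.prod_insert (by simp [h12, h13]), Finset.prod_insert (by simp [h23]),
        Finset.prod_singleton]
    rw [this]
    exact integrable_mul3 (hLp (p r1)) (hLp (p r2)) (hLp (p r3))
  have hsplit : ∫ ω, ∏ r, X (p r) ω ∂(ℙ : Measure Ω) = ∫ ω, X (p q) ω * g ω ∂(ℙ : Measure Ω) := by
    apply integral_congr_ae
    filter_upwards with ω
    exact (Finset.mul_prod_erase univ (fun r => X (p r) ω) (mem_univ q)).symm
  rw [hsplit]
  have := hindepF.integral_fun_mul_eq_mul_integral hXint.1 hgint.1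
  have heq : ∫ ω, X (p q) ω * g ω ∂(ℙ : Measure Ω) =
      (∫ ω, X (p q) ω ∂(ℙ : Measure Ω)) * ∫ ω, g ω ∂(ℙ : Measure Ω) := this
  rw [heq, hmean (p q), zero_mul]

end Analysis

/-! ### Combinatorics -/

set_option maxRecDepth 10000 in
set_option synthInstance.maxSize 1000 in
set_option synthInstance.maxHeartbeats 1000000 in
set_option maxHeartbeats 4000000 in
private lemma structure_lemma (φ : Fin 4 → Fin 4) (hφ : ∀ q, φ q ≠ q) :
    ∃ c d a b : Fin 4, φ a = c ∧ φ b = d ∧ c ≠ d ∧ a ≠ c ∧ b ≠ c ∧ b ≠ d := by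
  revert hφ; revert φ; decide

set_option maxRecDepth 10000 in
set_option synthInstance.maxSize 1000 in
set_option synthInstance.maxHeartbeats 1000000 in
set_option maxHeartbeats 4000000 in
private lemma compl_pair (c d : Fin 4) (hcd : c ≠ d) :
    ∃ e f : Fin 4, (∀ q, q = e ∨ q = f ∨ q = d ∨ q = c) := by
  revert hcd; revert c d; decide

private lemma card_V_le {n m : ℕ} (J : Fin n → Finset (Fin n)) (hJ : ∀ i, (J i).card ≤ m)
    (g : Fin n → Fin n → Fin n → Fin n) (h : Fin n → Fin n → Fin n) :
    ((univ : Finset (Fin n × Fin n × Fin n × Fin n)).filter fun t =>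
        t.2.2.2 ∈ J (g t.1 t.2.1 t.2.2.1) ∧ t.2.2.1 ∈ J (h t.1 t.2.1)).card
      ≤ n * n * (m * m) := by
  classical
  rw [Finset.card_filter]
  simp_rw [Fintype.sum_prod_type]
  have step1 : ∀ w x y : Fin n,
      (∑ z, if z ∈ J (g w x y) ∧ y ∈ J (h w x) then 1 else 0) ≤
        if y ∈ J (h w x) then m else 0 := by
    intro w x y
    by_cases hy : y ∈ J (h w x)
    · simp only [hy, and_true, if_true]
      calc (∑ z, if z ∈ J (g w x y) then 1 else 0)
          = (J (g w x y)).card := by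
            rw [Finset.sum_ite_mem, Finset.univ_inter, Finset.sum_const, smul_eq_mul, mul_one]
        _ ≤ m := hJ _
    · simp [hy]
  have step2 : ∀ w x : Fin n,
      (∑ y : Fin n, ∑ z : Fin n, if z ∈ J (g w x y) ∧ y ∈ J (h w x) then 1 else 0) ≤ m * m := by
    intro w x
    calc (∑ y : Fin n, ∑ z : Fin n, if z ∈ J (g w x y) ∧ y ∈ J (h w x) then 1 else 0)
        ≤ ∑ y : Fin n, if y ∈ J (h w x) then m else 0 :=
          Finset.sum_le_sum fun y _ => step1 w x y
      _ = (J (h w x)).card * m := by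
          rw [Finset.sum_ite_mem, Finset.univ_inter, Finset.sum_const, smul_eq_mul]
      _ ≤ m * m := Nat.mul_le_mul_right m (hJ _)
  calc (∑ w : Fin n, ∑ x : Fin n, ∑ y : Fin n, ∑ z : Fin n,
        if z ∈ J (g w x y) ∧ y ∈ J (h w x) then 1 else 0)
      ≤ ∑ w : Fin n, ∑ x : Fin n, (m * m) :=
        Finset.sum_le_sum fun w _ => Finset.sum_le_sum fun x _ => step2 w x
    _ = n * n * (m * m) := by
        simp [Finset.sum_const, Finset.card_univ, mul_assoc]

private lemma count_T {n m : ℕ} (J : Fin n → Finset (Fin n)) (hJ : ∀ i, (J i).card ≤ m)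
    (φ : Fin 4 → Fin 4) (hφ : ∀ q, φ q ≠ q) :
    ((univ : Finset (Fin 4 → Fin n)).filter fun p => ∀ q, p (φ q) ∈ J (p q)).card
      ≤ n * n * (m * m) := by
  classical
  obtain ⟨c, d, a, b, hac, hbd, hcd, hane, hbc, hbd'⟩ := structure_lemma φ hφ
  obtain ⟨e, f, hcov⟩ := compl_pair c d hcd
  have hato : a = e ∨ a = f ∨ a = d := by rcases hcov a with h|h|h|h <;> tauto
  have hbto : b = e ∨ b = f := by
    rcases hcov b with h|h|h|h
    · tauto
    · tauto
    · exact absurd h hbd'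
    · exact absurd h hbc
  have key : ∀ (g : Fin n → Fin n → Fin n → Fin n) (h : Fin n → Fin n → Fin n),
      (∀ p : Fin 4 → Fin n, g (p e) (p f) (p d) = p a) →
      (∀ p : Fin 4 → Fin n, h (p e) (p f) = p b) →
      ((univ : Finset (Fin 4 → Fin n)).filter fun p => ∀ q, p (φ q) ∈ J (p q)).card
        ≤ n * n * (m * m) := by
    intro g h hg hh
    refine le_trans (Finset.card_le_card_of_injOn (fun p => (p e, p f, p d, p c)) ?_ ?_)
      (card_V_le J hJ g h)
    · intro p hp
      simp only [Finset.mem_coe, Finset.mem_filter, Finset.mem_univ, true_and] at hp ⊢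
      constructor
      · rw [hg p]
        have := hp a; rwa [hac] at this
      · rw [hh p]
        have := hp b; rwa [hbd] at this
    · intro p _ p' _ hpe
      funext q
      simp only [Prod.mk.injEq] at hpe
      obtain ⟨h1, h2, h3, h4⟩ := hpe
      rcases hcov q with rfl|rfl|rfl|rfl <;> assumption
  rcases hato with rfl | rfl | rfl
  · rcases hbto with rfl | rfl
    · exact key (fun w _ _ => w) (fun w _ => w) (fun _ => rfl) (fun _ => rfl)
    · exact key (fun w _ _ => w) (fun _ x => x) (fun _ => rfl) (fun _ => rfl)
  · rcases hbto with rfl | rfl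
    · exact key (fun _ x _ => x) (fun w _ => w) (fun _ => rfl) (fun _ => rfl)
    · exact key (fun _ x _ => x) (fun _ x => x) (fun _ => rfl) (fun _ => rfl)
  · rcases hbto with rfl | rfl
    · exact key (fun _ _ y => y) (fun w _ => w) (fun _ => rfl) (fun _ => rfl)
    · exact key (fun _ _ y => y) (fun _ x => x) (fun _ => rfl) (fun _ => rfl)

private lemma card_bad_le {n m : ℕ} (J : Fin n → Finset (Fin n)) (hJ : ∀ i, (J i).card ≤ m) :
    ((univ : Finset (Fin 4 → Fin n)).filter fun p => ∀ q, ∃ r, r ≠ q ∧ p r ∈ J (p q)).card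
      ≤ 256 * (n * n * (m * m)) := by
  have hsub : ((univ : Finset (Fin 4 → Fin n)).filter fun p => ∀ q, ∃ r, r ≠ q ∧ p r ∈ J (p q))
      ⊆ (univ.filter (fun φ : Fin 4 → Fin 4 => ∀ q, φ q ≠ q)).biUnion
          (fun φ => univ.filter fun p => ∀ q, p (φ q) ∈ J (p q)) := by
    intro p hp
    rw [Finset.mem_filter] at hp
    rw [Finset.mem_biUnion]
    choose φ hφ1 hφ2 using hp.2
    exact ⟨φ, Finset.mem_filter.mpr ⟨Finset.mem_univ _, hφ1⟩,
      Finset.mem_filter.mpr ⟨Finset.mem_univ _, hφ2⟩⟩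
  refine le_trans (Finset.card_le_card hsub) (le_trans Finset.card_biUnion_le ?_)
  refine le_trans (Finset.sum_le_sum (fun φ hφ => count_T J hJ φ (Finset.mem_filter.mp hφ).2)) ?_
  rw [Finset.sum_const, smul_eq_mul]
  apply Nat.mul_le_mul_right
  exact le_trans (Finset.card_filter_le _ _) (by simp)

/-- fourth-moment bound for sums of mean-zero variables with an
m-dependency-neighborhood structure: E[(∑ X_i)⁴] ≤ C'(n m³ + n² m²), with C'
depending only on C. -/
theorem fourth_moment_sum_m_dependent
    (C : ℝ) (hC : 0 ≤ C) :
    ∃ C' : ℝ, 0 < C' ∧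
      ∀ (n m : ℕ) (Ω : Type) (_ : MeasureSpace Ω)
        (_ : IsProbabilityMeasure (ℙ : Measure Ω))
        (X : Fin n → Ω → ℝ) (J : Fin n → Finset (Fin n)),
        (∀ i, Measurable (X i)) →
        (∀ i, MemLp (X i) 4 ℙ) →
        (∀ i, ∫ ω, X i ω ∂ℙ = 0) →
        (∀ i, ∫ ω, (X i ω) ^ 4 ∂ℙ ≤ C) →
        (∀ i, i ∈ J i) →
        (∀ i, (J i).card ≤ m) →
        (∀ i, Indep (MeasurableSpace.comap (X i) inferInstance)
            (⨆ j ∈ (J i)ᶜ, MeasurableSpace.comap (X j) inferInstance) ℙ) →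
        ∫ ω, (∑ i, X i ω) ^ 4 ∂ℙ ≤
          C' * ((n : ℝ) * (m : ℝ) ^ 3 + (n : ℝ) ^ 2 * (m : ℝ) ^ 2) := by
  refine ⟨256 * C + 1, by positivity, ?_⟩
  intro n m Ω _inst _instP X J hmeas hLp hmean hC4 _hself hcard hindep
  have hrw : (fun ω => (∑ i, X i ω) ^ 4) = fun ω => ∑ p : Fin 4 → Fin n, ∏ r, X (p r) ω := by
    funext ω; exact Fintype.sum_pow (fun i => X i ω) 4
  have h1 : ∫ ω, (∑ i, X i ω) ^ 4 ∂(ℙ : Measure Ω)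
      = ∑ p : Fin 4 → Fin n, ∫ ω, ∏ r, X (p r) ω ∂(ℙ : Measure Ω) := by
    rw [hrw]
    exact integral_finset_sum univ fun p _ => integrable_prod4 hLp p
  rw [h1]
  have hzero : ∀ p ∈ univ.filter (fun p : Fin 4 → Fin n =>
      ¬ ∀ q, ∃ r, r ≠ q ∧ p r ∈ J (p q)),
      ∫ ω, ∏ r, X (p r) ω ∂(ℙ : Measure Ω) = 0 := by
    intro p hp
    rw [Finset.mem_filter] at hp
    have hp2 := hp.2
    push_neg at hp2
    obtain ⟨q, hq⟩ := hp2
    exact integral_prod4_eq_zero hmeas hLp hmean hindep p q hq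
  have hsplit : ∑ p : Fin 4 → Fin n, ∫ ω, ∏ r, X (p r) ω ∂(ℙ : Measure Ω)
      = ∑ p ∈ univ.filter (fun p : Fin 4 → Fin n => ∀ q, ∃ r, r ≠ q ∧ p r ∈ J (p q)),
          ∫ ω, ∏ r, X (p r) ω ∂(ℙ : Measure Ω) := by
    rw [← Finset.sum_filter_add_sum_filter_not univ
      (fun p : Fin 4 → Fin n => ∀ q, ∃ r, r ≠ q ∧ p r ∈ J (p q))]
    rw [Finset.sum_eq_zero hzero, add_zero]
  rw [hsplit]
  have hle : ∑ p ∈ univ.filter (fun p : Fin 4 → Fin n => ∀ q, ∃ r, r ≠ q ∧ p r ∈ J (p q)),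
      ∫ ω, ∏ r, X (p r) ω ∂(ℙ : Measure Ω)
      ≤ ((univ.filter (fun p : Fin 4 → Fin n => ∀ q, ∃ r, r ≠ q ∧ p r ∈ J (p q))).card : ℝ) * C := by
    refine le_trans (Finset.sum_le_sum fun p _ => integral_prod4_le hLp hC4 p) ?_
    rw [Finset.sum_const, nsmul_eq_mul]
  refine hle.trans ?_
  have hcardb : (((univ.filter (fun p : Fin 4 → Fin n =>
      ∀ q, ∃ r, r ≠ q ∧ p r ∈ J (p q))).card : ℝ)) ≤ 256 * ((n:ℝ) * n * (m * m)) := by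
    have := card_bad_le J hcard
    calc (((univ.filter (fun p : Fin 4 → Fin n =>
        ∀ q, ∃ r, r ≠ q ∧ p r ∈ J (p q))).card : ℝ))
        ≤ ((256 * (n * n * (m * m)) : ℕ) : ℝ) := by exact_mod_cast this
      _ = 256 * ((n:ℝ) * n * (m * m)) := by push_cast; ring
  have ha : (0:ℝ) ≤ (n:ℝ) := Nat.cast_nonneg n
  have hb : (0:ℝ) ≤ (m:ℝ) := Nat.cast_nonneg m
  have hab3 : (0:ℝ) ≤ (n:ℝ) * (m:ℝ)^3 := by positivity
  have ha2b2 : (0:ℝ) ≤ (n:ℝ)^2 * (m:ℝ)^2 := by positivity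
  calc ((univ.filter (fun p : Fin 4 → Fin n => ∀ q, ∃ r, r ≠ q ∧ p r ∈ J (p q))).card : ℝ) * C
      ≤ (256 * ((n:ℝ) * n * (m * m))) * C := mul_le_mul_of_nonneg_right hcardb hC
    _ ≤ (256 * C + 1) * ((n:ℝ) * (m:ℝ)^3 + (n:ℝ)^2 * (m:ℝ)^2) := by
        nlinarith [mul_nonneg hC hab3, mul_nonneg hC ha2b2]
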